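/- Let I ⊆ (0,∞) be a nondegenerate open interval, λ ∈ ℝ, and f : I → ℝ twice differentiable. Then f''(r) + 2·f'(r)/r = λ for all r ∈ I if and only if there exist constants c_1, c_2 ∈ ℝ such that f(r) = −c_1/r + (λ/6)·r² + c_2 for all r ∈ I. -/

import Mathlib

lemma const_of_zero_deriv (I : Set ℝ) (hIopen : IsOpen I) (hconv : Convex ℝ I)
    (g : ℝ → ℝ) (hg : ∀ r ∈ I, HasDerivAt g 0 r) {x y : ℝ} (hx : x ∈ I) (hy : y ∈ I) :
    g x = g y := by
  apply hconv.is_const_of_fderivWithin_eq_zero (𝕜 := ℝ)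
      (fun r hr => ((hg r hr).differentiableAt).differentiableWithinAt) _ hx hy
  intro z hz
  rw [fderivWithin_of_isOpen hIopen hz, (hg z hz).hasFDerivAt.fderiv]
  ext; simp

lemma hasDerivAt_G (c₁ lam c₂ : ℝ) {r : ℝ} (hr : r ≠ 0) :
    HasDerivAt (fun s => -c₁ / s + lam / 6 * s ^ 2 + c₂) (c₁ / r ^ 2 + lam / 3 * r) r := by
  have h1 : HasDerivAt (fun s : ℝ => s⁻¹) (-(r ^ 2)⁻¹) r := hasDerivAt_inv hr
  have h2 := ((h1.const_mul (-c₁)).add ((hasDerivAt_pow 2 r).const_mul (lam / 6))).add_const c₂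
  have heq : (fun s => -c₁ / s + lam / 6 * s ^ 2 + c₂)
      = fun s => -c₁ * s⁻¹ + lam / 6 * s ^ 2 + c₂ := by
    funext s; rw [div_eq_mul_inv]
  rw [heq]
  refine h2.congr_deriv ?_
  field_simp; ring

lemma hasDerivAt_G' (c₁ lam : ℝ) {r : ℝ} (hr : r ≠ 0) :
    HasDerivAt (fun s => c₁ / s ^ 2 + lam / 3 * s) (-2 * c₁ / r ^ 3 + lam / 3) r := by
  have h1 : HasDerivAt (fun s : ℝ => c₁ / s ^ 2) ((0 * r ^ 2 - c₁ * (2 * r ^ 1)) / (r ^ 2) ^ 2) r :=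
    (hasDerivAt_const r c₁).div (hasDerivAt_pow 2 r) (pow_ne_zero 2 hr)
  have h2 := h1.add ((hasDerivAt_id r).const_mul (lam / 3))
  refine h2.congr_deriv ?_
  field_simp; ring

/-- Analytic core of Proposition 6.3 of the paper: on a nondegenerate open
interval `I ⊆ (0,∞)`, a twice differentiable `f` satisfies
`f'' + 2f'/r = λ` on `I` iff `f(r) = -c₁/r + (λ/6)r² + c₂` on `I` for some
constants `c₁, c₂`. -/
theorem stmt_17 (I : Set ℝ) (hIopen : IsOpen I) (hIconn : I.OrdConnected)
    (hIsub : I ⊆ Set.Ioi (0 : ℝ)) (hInt : I.Nontrivial)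
    (lam : ℝ) (f : ℝ → ℝ)
    (hf : ∀ r ∈ I, DifferentiableAt ℝ f r)
    (hf' : ∀ r ∈ I, DifferentiableAt ℝ (deriv f) r) :
    (∀ r ∈ I, deriv (deriv f) r + 2 * deriv f r / r = lam) ↔
    (∃ c₁ c₂ : ℝ, ∀ r ∈ I, f r = -c₁ / r + lam / 6 * r ^ 2 + c₂) := by
  have hconv : Convex ℝ I := convex_iff_ordConnected.mpr hIconn
  obtain ⟨r₀, hr₀I, -, -, -⟩ := hInt
  have hpos : ∀ r ∈ I, (0 : ℝ) < r := fun r hr => hIsub hr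
  constructor
  · intro H
    -- step 1: h r := r² f' r - lam r³/3 has zero derivative on I
    set h : ℝ → ℝ := fun r => r ^ 2 * deriv f r - lam * r ^ 3 / 3 with hh
    have hderiv : ∀ r ∈ I, HasDerivAt h 0 r := by
      intro r hr
      have hrpos := hpos r hr
      have h1 : HasDerivAt (fun s => s ^ 2 * deriv f s)
          (2 * r ^ 1 * deriv f r + r ^ 2 * deriv (deriv f) r) r :=
        (hasDerivAt_pow 2 r).mul (hf' r hr).hasDerivAt
      have h2 : HasDerivAt (fun s => lam * s ^ 3 / 3) (lam * (3 * r ^ 2) / 3) r := by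
        simpa [mul_div_assoc] using (((hasDerivAt_pow 3 r).const_mul lam).div_const 3)
      have h3 := h1.sub h2
      refine h3.congr_deriv ?_
      have hE := H r hr
      have : deriv (deriv f) r = lam - 2 * deriv f r / r := by linarith
      rw [this]
      field_simp
      ring
    -- step 2: h is constant
    set C : ℝ := h r₀ with hC
    have hconst : ∀ r ∈ I, h r = C := fun r hr =>
      const_of_zero_deriv I hIopen hconv h hderiv hr hr₀I
    have hderivf : ∀ r ∈ I, deriv f r = C / r ^ 2 + lam / 3 * r := by
      intro r hr
      have hrpos := hpos r hr
      have := hconst r hr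
      simp only [hh] at this
      field_simp
      linear_combination 3 * this
    -- step 3: f - F constant where F := -C/r + lam/6 r²
    set F : ℝ → ℝ := fun s => -C / s + lam / 6 * s ^ 2 with hF
    have hgz : ∀ r ∈ I, HasDerivAt (fun s => f s - F s) 0 r := by
      intro r hr
      have hrpos := hpos r hr
      have hG : HasDerivAt F (C / r ^ 2 + lam / 3 * r) r := by
        simpa [hF] using hasDerivAt_G C lam 0 hrpos.ne'
      have h1 := (hf r hr).hasDerivAt.sub hG
      rw [hderivf r hr] at h1
      exact h1.congr_deriv (sub_self _)
    refine ⟨C, f r₀ - F r₀, fun r hr => ?_⟩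
    have := const_of_zero_deriv I hIopen hconv _ hgz hr hr₀I
    simp only [hF] at this ⊢
    linarith
  · rintro ⟨c₁, c₂, hfe⟩ r hr
    have hrpos := hpos r hr
    have hmem : I ∈ nhds r := hIopen.mem_nhds hr
    -- deriv f = G' on I
    have hd1 : ∀ s ∈ I, deriv f s = c₁ / s ^ 2 + lam / 3 * s := by
      intro s hs
      have hse : f =ᶠ[nhds s] fun t => -c₁ / t + lam / 6 * t ^ 2 + c₂ :=
        Filter.eventuallyEq_of_mem (hIopen.mem_nhds hs) hfe
      rw [hse.deriv_eq, (hasDerivAt_G c₁ lam c₂ (hpos s hs).ne').deriv]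
    have hd2 : deriv f =ᶠ[nhds r] fun s => c₁ / s ^ 2 + lam / 3 * s :=
      Filter.eventuallyEq_of_mem hmem hd1
    rw [hd2.deriv_eq, (hasDerivAt_G' c₁ lam hrpos.ne').deriv, hd1 r hr]
    field_simp
    ring
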